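/- A complete geodesic of curvature λ in the sub-Riemannian S^3 is a closed curve (periodic) if and only if λ/√(1+λ²) is a rational number. -/

import Mathlib

open Real
open scoped RealInnerProductSpace

def qi : Quaternion ℝ := ⟨0, 1, 0, 0⟩

lemma qi_re : qi.re = 0 := rfl
lemma qi_imI : qi.imI = 1 := rfl
lemma qi_imJ : qi.imJ = 0 := rfl
lemma qi_imK : qi.imK = 0 := rfl

lemma qi_mul_qi : qi * qi = -1 := by
  ext <;> simp [qi_re, qi_imI, qi_imJ, qi_imK, Quaternion.re_one, Quaternion.imI_one, Quaternion.imJ_one, Quaternion.imK_one, Quaternion.re_mul, Quaternion.imI_mul, Quaternion.imJ_mul, Quaternion.imK_mul]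

lemma inner_coord (a b : Quaternion ℝ) :
    ⟪a, b⟫ = a.re*b.re + a.imI*b.imI + a.imJ*b.imJ + a.imK*b.imK := by
  rw [Quaternion.inner_def]
  simp only [Quaternion.re_mul, Quaternion.re_star, Quaternion.imI_star, Quaternion.imJ_star,
    Quaternion.imK_star]
  ring

lemma qi_mul_re (a : Quaternion ℝ) : (qi * a).re = -a.imI := by simp [qi_re, qi_imI, qi_imJ, qi_imK, Quaternion.re_one, Quaternion.imI_one, Quaternion.imJ_one, Quaternion.imK_one, Quaternion.re_mul]
lemma qi_mul_imI (a : Quaternion ℝ) : (qi * a).imI = a.re := by simp [qi_re, qi_imI, qi_imJ, qi_imK, Quaternion.re_one, Quaternion.imI_one, Quaternion.imJ_one, Quaternion.imK_one, Quaternion.imI_mul]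
lemma qi_mul_imJ (a : Quaternion ℝ) : (qi * a).imJ = -a.imK := by simp [qi_re, qi_imI, qi_imJ, qi_imK, Quaternion.re_one, Quaternion.imI_one, Quaternion.imJ_one, Quaternion.imK_one, Quaternion.imJ_mul]
lemma qi_mul_imK (a : Quaternion ℝ) : (qi * a).imK = a.imJ := by simp [qi_re, qi_imI, qi_imJ, qi_imK, Quaternion.re_one, Quaternion.imI_one, Quaternion.imJ_one, Quaternion.imK_one, Quaternion.imK_mul]

lemma inner_qi_left (a b : Quaternion ℝ) : ⟪qi * a, b⟫ = -⟪a, qi * b⟫ := by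
  simp only [inner_coord, qi_mul_re, qi_mul_imI, qi_mul_imJ, qi_mul_imK]; ring

lemma inner_qi_self (a : Quaternion ℝ) : ⟪qi * a, a⟫ = 0 := by
  simp only [inner_coord, qi_mul_re, qi_mul_imI, qi_mul_imJ, qi_mul_imK]; ring

lemma inner_qi_qi (a b : Quaternion ℝ) : ⟪qi * a, qi * b⟫ = ⟪a, b⟫ := by
  simp only [inner_coord, qi_mul_re, qi_mul_imI, qi_mul_imJ, qi_mul_imK]; ring

lemma const_of_hasDerivAt_zero {F : ℝ → Quaternion ℝ} (h : ∀ s, HasDerivAt F 0 s) (s : ℝ) :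
    F s = F 0 := by
  apply is_const_of_fderiv_eq_zero (𝕜 := ℝ) (fun x => (h x).differentiableAt)
  intro x
  have := (h x).hasFDerivAt.fderiv
  rw [this]
  ext y <;> simp

lemma geo_alg (lam : ℝ) (e g g' g'' : Quaternion ℝ) (hcomm : qi * e = e * qi)
    (h : g'' + g + (2 * lam) • (qi * g') = 0) :
    lam • ((qi * e) * (lam • (qi * g) + g')) + e * (lam • (qi * g') + g'')
      = (-(1 + lam ^ 2)) • (e * g) := by
  have hg'' : g'' = -g - (2 * lam) • (qi * g') := by
    rw [add_assoc] at h
    rw [eq_neg_of_add_eq_zero_left h, neg_add]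
    abel
  have h3 : (e * qi) * (qi * g) = -(e * g) := by
    rw [mul_assoc, ← mul_assoc qi qi g, qi_mul_qi, neg_one_mul, mul_neg]
  have h4 : (e * qi) * g' = e * (qi * g') := mul_assoc _ _ _
  rw [hcomm, hg'', mul_add, mul_smul_comm, h3, mul_add, mul_smul_comm, h4, mul_sub, mul_neg,
    mul_smul_comm]
  module

lemma geodesic_formula (lam : ℝ) (γ γ' γ'' : ℝ → Quaternion ℝ)
    (hd1 : ∀ s, HasDerivAt γ (γ' s) s) (hd2 : ∀ s, HasDerivAt γ' (γ'' s) s)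
    (heq : ∀ s, γ'' s + γ s + (2 * lam) • (qi * γ' s) = 0) :
    ∀ s, γ s = (Real.cos (lam*s) • (1 : Quaternion ℝ) - Real.sin (lam*s) • qi) *
      (Real.cos (Real.sqrt (1 + lam ^ 2) * s) • γ 0 +
        (Real.sin (Real.sqrt (1 + lam ^ 2) * s) / Real.sqrt (1 + lam ^ 2)) •
          (γ' 0 + lam • (qi * γ 0))) := by
  set μ := Real.sqrt (1 + lam ^ 2) with hμdef
  have hμsq : μ ^ 2 = 1 + lam ^ 2 := Real.sq_sqrt (by positivity)
  have hμpos : 0 < μ := Real.sqrt_pos.2 (by positivity)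
  set e : ℝ → Quaternion ℝ := fun s => Real.cos (lam*s) • (1 : Quaternion ℝ) + Real.sin (lam*s) • qi with he_def
  set eb : ℝ → Quaternion ℝ := fun s => Real.cos (lam*s) • (1 : Quaternion ℝ) - Real.sin (lam*s) • qi with heb_def
  have hebe : ∀ s, eb s * e s = 1 := by
    intro s
    have pyth := Real.sin_sq_add_cos_sq (lam*s)
    ext <;>
      simp [he_def, heb_def,  qi_re, qi_imI, qi_imJ, qi_imK, Quaternion.re_one, Quaternion.imI_one, Quaternion.imJ_one, Quaternion.imK_one, Quaternion.re_mul, Quaternion.imI_mul, Quaternion.imJ_mul,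
        Quaternion.imK_mul] <;> nlinarith [pyth]
  have hcomm : ∀ s, qi * e s = e s * qi := by
    intro s
    ext <;>
      simp [he_def,  qi_re, qi_imI, qi_imJ, qi_imK, Quaternion.re_one, Quaternion.imI_one, Quaternion.imJ_one, Quaternion.imK_one, Quaternion.re_mul, Quaternion.imI_mul, Quaternion.imJ_mul,
        Quaternion.imK_mul]
  have he : ∀ s, HasDerivAt e (lam • (qi * e s)) s := by
    intro s
    have h1 : HasDerivAt (fun t : ℝ => Real.cos (lam*t)) (-Real.sin (lam*s) * lam) s := by
      simpa using (HasDerivAt.cos ((hasDerivAt_id s).const_mul lam))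
    have h2 : HasDerivAt (fun t : ℝ => Real.sin (lam*t)) (Real.cos (lam*s) * lam) s := by
      simpa using (HasDerivAt.sin ((hasDerivAt_id s).const_mul lam))
    have h3 := (h1.smul_const (1 : Quaternion ℝ)).add (h2.smul_const qi)
    refine h3.congr_deriv ?_; symm
    ext <;> simp [he_def,  qi_re, qi_imI, qi_imJ, qi_imK, Quaternion.re_one, Quaternion.imI_one, Quaternion.imJ_one, Quaternion.imK_one, Quaternion.re_mul, Quaternion.imI_mul, Quaternion.imJ_mul,
      Quaternion.imK_mul] <;> ring
  set v : ℝ → Quaternion ℝ := fun s => lam • (qi * γ s) + γ' s with hv_def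
  set u : ℝ → Quaternion ℝ := fun s => e s * γ s with hu_def
  set w : ℝ → Quaternion ℝ := fun s => e s * v s with hw_def
  have hu : ∀ s, HasDerivAt u (w s) s := by
    intro s
    have := (he s).mul (hd1 s)
    refine this.congr_deriv ?_; symm
    show e s * (lam • (qi * γ s) + γ' s) = _
    rw [smul_mul_assoc, mul_add, mul_smul_comm, ← mul_assoc, ← hcomm s, mul_assoc]
  have hv : ∀ s, HasDerivAt v (lam • (qi * γ' s) + γ'' s) s := by
    intro s
    exact (((hd1 s).const_mul qi).const_smul lam).add (hd2 s)
  have hw : ∀ s, HasDerivAt w ((-(μ^2)) • u s) s := by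
    intro s
    have := (he s).mul (hv s)
    refine this.congr_deriv ?_; symm
    rw [smul_mul_assoc] at this ⊢
    rw [hμsq]
    exact (geo_alg lam (e s) (γ s) (γ' s) (γ'' s) (hcomm s) (heq s)).symm
  set C1 : ℝ → Quaternion ℝ := fun s => Real.cos (μ*s) • w s + (μ * Real.sin (μ*s)) • u s with hC1_def
  set C2 : ℝ → Quaternion ℝ := fun s => Real.sin (μ*s) • w s - (μ * Real.cos (μ*s)) • u s with hC2_def
  have hc : ∀ s : ℝ, HasDerivAt (fun t : ℝ => Real.cos (μ*t)) (-Real.sin (μ*s) * μ) s := by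
    intro s; simpa using (HasDerivAt.cos ((hasDerivAt_id s).const_mul μ))
  have hs : ∀ s : ℝ, HasDerivAt (fun t : ℝ => Real.sin (μ*t)) (Real.cos (μ*s) * μ) s := by
    intro s; simpa using (HasDerivAt.sin ((hasDerivAt_id s).const_mul μ))
  have hC1 : ∀ s, C1 s = C1 0 := by
    apply const_of_hasDerivAt_zero
    intro s
    have := ((hc s).smul (hw s)).add (((hs s).const_mul μ).smul (hu s))
    refine this.congr_deriv ?_; symm
    match_scalars <;> ring
  have hC2 : ∀ s, C2 s = C2 0 := by
    apply const_of_hasDerivAt_zero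
    intro s
    have := ((hs s).smul (hw s)).sub (((hc s).const_mul μ).smul (hu s))
    refine this.congr_deriv ?_; symm
    match_scalars <;> ring
  have hu0 : u 0 = γ 0 := by simp [hu_def, he_def]
  have hw0 : w 0 = γ' 0 + lam • (qi * γ 0) := by
    simp [hw_def, he_def, hv_def]
    abel
  have husol : ∀ s, u s = Real.cos (μ*s) • γ 0 + (Real.sin (μ*s) / μ) • (γ' 0 + lam • (qi * γ 0)) := by
    intro s
    have e1 := hC1 s
    have e2 := hC2 s
    rw [hC1_def] at e1
    rw [hC2_def] at e2
    simp only [mul_zero, Real.cos_zero, Real.sin_zero, one_smul, zero_smul, smul_zero,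
      mul_one, add_zero, zero_sub, zero_add] at e1 e2
    rw [hw0] at e1
    rw [hu0] at e2
    have pyth := Real.sin_sq_add_cos_sq (μ*s)
    have hμne : μ ≠ 0 := ne_of_gt hμpos
    have h6 : ∀ U W : Quaternion ℝ, μ • U = Real.sin (μ*s) • (Real.cos (μ*s) • W + (μ * Real.sin (μ*s)) • U)
        - Real.cos (μ*s) • (Real.sin (μ*s) • W - (μ * Real.cos (μ*s)) • U) := by
      intro U W
      match_scalars <;>
        first
          | ring1
          | linear_combination (-μ) * pyth
          | linear_combination (-(2*μ)) * pyth
          | linear_combination μ * pyth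
          | linear_combination (2*μ) * pyth
    have h6' := h6 (u s) (w s)
    rw [e1, e2] at h6'
    have h7 : ∀ X Y : Quaternion ℝ, Real.sin (μ*s) • X - Real.cos (μ*s) • (-(μ • Y))
        = μ • (Real.cos (μ*s) • Y + (Real.sin (μ*s) / μ) • X) := by
      intro X Y
      match_scalars <;> field_simp <;> ring
    rw [h7] at h6'
    exact smul_right_injective (Quaternion ℝ) hμne h6'
  intro s
  have : γ s = eb s * u s := by
    rw [hu_def]
    simp only []
    rw [← mul_assoc, hebe s, one_mul]
  rw [this, husol s]

lemma inner_expand (c d C D : ℝ) (p v y : Quaternion ℝ) :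
    ⟪(c • (1:Quaternion ℝ) - d • qi) * (C • p + D • v), y⟫
      = c*C*⟪p,y⟫ + c*D*⟪v,y⟫ - d*C*⟪qi*p,y⟫ - d*D*⟪qi*v,y⟫ := by
  have hexp : (c • (1:Quaternion ℝ) - d • qi) * (C • p + D • v)
      = (c*C) • p + (c*D) • v - ((d*C) • (qi*p) + (d*D) • (qi*v)) := by
    simp only [sub_mul, mul_add, smul_mul_assoc, one_mul, mul_smul_comm, smul_smul]
    module
  rw [hexp, inner_sub_left, inner_add_left, inner_add_left, real_inner_smul_left,
    real_inner_smul_left, real_inner_smul_left, real_inner_smul_left]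
  ring

/-- A complete geodesic of curvature `λ` in the sub-Riemannian `S³` — i.e. a
horizontal arc-length solution of `γ'' + γ + 2λ(i·γ') = 0` — is a closed
(periodic) curve if and only if `λ/√(1+λ²)` is a rational number. -/
theorem geodesic_closed_iff_rational (lam : ℝ) (γ γ' γ'' : ℝ → Quaternion ℝ)
    (hp : ‖γ 0‖ = 1) (hv : ‖γ' 0‖ = 1)
    (htan : ⟪γ' 0, γ 0⟫ = 0) (hhor : ⟪γ' 0, qi * γ 0⟫ = 0)
    (hd1 : ∀ s, HasDerivAt γ (γ' s) s) (hd2 : ∀ s, HasDerivAt γ' (γ'' s) s)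
    (heq : ∀ s, γ'' s + γ s + (2 * lam) • (qi * γ' s) = 0) :
    (∃ T : ℝ, 0 < T ∧ ∀ s, γ (s + T) = γ s) ↔
      ∃ r : ℚ, lam / Real.sqrt (1 + lam ^ 2) = (r : ℝ) := by
  set μ := Real.sqrt (1 + lam ^ 2) with hμdef
  have hμpos : 0 < μ := Real.sqrt_pos.2 (by positivity)
  have hμne : μ ≠ 0 := ne_of_gt hμpos
  have hform := geodesic_formula lam γ γ' γ'' hd1 hd2 heq
  rw [← hμdef] at hform
  -- inner product values
  have hv1 : ⟪γ 0, γ' 0⟫ = 0 := by rw [real_inner_comm]; exact htan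
  have hv3 : ⟪qi * γ 0, γ' 0⟫ = 0 := by rw [real_inner_comm]; exact hhor
  have hvv : ⟪γ' 0, γ' 0⟫ = 1 := by rw [real_inner_self_eq_norm_sq, hv]; norm_num
  have hv2 : ⟪γ' 0 + lam • (qi * γ 0), γ' 0⟫ = 1 := by
    rw [inner_add_left, real_inner_smul_left, hvv, hv3]; ring
  have hv4 : ⟪qi * (γ' 0 + lam • (qi * γ 0)), γ' 0⟫ = 0 := by
    rw [mul_add, mul_smul_comm, ← mul_assoc, qi_mul_qi, neg_one_mul, inner_add_left,
      real_inner_smul_left, inner_neg_left, inner_qi_self, hv1]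
    ring
  have hw1 : ⟪γ 0, qi * γ' 0⟫ = 0 := by
    have := inner_qi_left (γ 0) (γ' 0)
    rw [hv3] at this
    linarith
  have hw2 : ⟪γ' 0 + lam • (qi * γ 0), qi * γ' 0⟫ = 0 := by
    rw [inner_add_left, real_inner_smul_left, inner_qi_qi, hv1]
    have h := inner_qi_left (γ' 0) (γ' 0)
    rw [inner_qi_self] at h
    linarith
  have hw3 : ⟪qi * γ 0, qi * γ' 0⟫ = 0 := by rw [inner_qi_qi]; exact hv1
  have hw4 : ⟪qi * (γ' 0 + lam • (qi * γ 0)), qi * γ' 0⟫ = 1 := by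
    rw [inner_qi_qi]; exact hv2
  have hA : ∀ s, ⟪γ s, γ' 0⟫ = Real.cos (lam*s) * (Real.sin (μ*s)/μ) := by
    intro s
    rw [hform s, inner_expand, hv1, hv2, hv3, hv4]
    ring
  have hB : ∀ s, ⟪γ s, qi * γ' 0⟫ = -(Real.sin (lam*s) * (Real.sin (μ*s)/μ)) := by
    intro s
    rw [hform s, inner_expand, hw1, hw2, hw3, hw4]
    ring
  constructor
  · rintro ⟨T, hT, hper⟩
    have P1 : ∀ s, Real.cos (lam*(s+T)) * Real.sin (μ*(s+T)) = Real.cos (lam*s) * Real.sin (μ*s) := by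
      intro s
      have h0 : ⟪γ (s+T), γ' 0⟫ = ⟪γ s, γ' 0⟫ := by rw [hper s]
      rw [hA, hA] at h0
      field_simp at h0
      rw [mul_comm (s + T) μ, mul_comm s μ] at h0
      linarith
    have P2 : ∀ s, Real.sin (lam*(s+T)) * Real.sin (μ*(s+T)) = Real.sin (lam*s) * Real.sin (μ*s) := by
      intro s
      have h0 : ⟪γ (s+T), qi * γ' 0⟫ = ⟪γ s, qi * γ' 0⟫ := by rw [hper s]
      rw [hB, hB] at h0
      field_simp [hμne] at h0
      rw [mul_comm (s + T) μ, mul_comm s μ] at h0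
      linarith
    set α := μ + lam with hα
    set β := μ - lam with hβ
    have ere : ∀ x : ℝ, (Complex.exp ((β*x : ℝ) * Complex.I)
        - Complex.exp ((-(α*x) : ℝ) * Complex.I)).re
        = 2*(Real.sin (lam*x) * Real.sin (μ*x)) := by
      intro x
      rw [Complex.sub_re, Complex.exp_ofReal_mul_I_re, Complex.exp_ofReal_mul_I_re]
      have h1 : β*x = μ*x - lam*x := by rw [hβ]; ring
      have h2 : -(α*x) = -(μ*x + lam*x) := by rw [hα]; ring
      rw [h1, h2, Real.cos_neg, Real.cos_sub, Real.cos_add]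
      ring
    have eim : ∀ x : ℝ, (Complex.exp ((β*x : ℝ) * Complex.I)
        - Complex.exp ((-(α*x) : ℝ) * Complex.I)).im
        = 2*(Real.cos (lam*x) * Real.sin (μ*x)) := by
      intro x
      rw [Complex.sub_im, Complex.exp_ofReal_mul_I_im, Complex.exp_ofReal_mul_I_im]
      have h1 : β*x = μ*x - lam*x := by rw [hβ]; ring
      have h2 : -(α*x) = -(μ*x + lam*x) := by rw [hα]; ring
      rw [h1, h2, Real.sin_neg, Real.sin_sub, Real.sin_add]
      ring
    have hg : ∀ s : ℝ, Complex.exp ((β*(s+T) : ℝ) * Complex.I)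
        - Complex.exp ((-(α*(s+T)) : ℝ) * Complex.I)
        = Complex.exp ((β*s : ℝ) * Complex.I) - Complex.exp ((-(α*s) : ℝ) * Complex.I) := by
      intro s
      apply Complex.ext
      · rw [ere (s+T), ere s, P2 s]
      · rw [eim (s+T), eim s, P1 s]
    have hE2 : Complex.exp ((-(α*T) : ℝ) * Complex.I) = Complex.exp ((β*T : ℝ) * Complex.I) := by
      have h0 := hg 0
      simp only [zero_add, mul_zero, neg_zero, Complex.ofReal_zero, zero_mul,
        Complex.exp_zero, sub_self] at h0
      exact (sub_eq_zero.mp h0).symm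
    have hfact : ∀ s : ℝ, (Complex.exp ((β*s:ℝ)*Complex.I) - Complex.exp ((-(α*s):ℝ)*Complex.I))
        * (Complex.exp ((β*T:ℝ)*Complex.I) - 1) = 0 := by
      intro s
      have h0 := hg s
      have hsplit1 : ((β*(s+T) : ℝ) : ℂ) * Complex.I
          = ((β*s:ℝ) : ℂ)*Complex.I + ((β*T:ℝ) : ℂ)*Complex.I := by push_cast; ring
      have hsplit2 : ((-(α*(s+T)) : ℝ) : ℂ) * Complex.I
          = ((-(α*s):ℝ) : ℂ)*Complex.I + ((-(α*T):ℝ) : ℂ)*Complex.I := by push_cast; ring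
      rw [hsplit1, hsplit2, Complex.exp_add, Complex.exp_add, hE2] at h0
      linear_combination h0
    have hP : Complex.exp ((β*T:ℝ)*Complex.I) = 1 := by
      by_contra hne
      have hs0 := hfact (π/(2*μ))
      rcases mul_eq_zero.mp hs0 with h | h
      · have hxy : Complex.exp ((β*(π/(2*μ)):ℝ)*Complex.I)
            = Complex.exp ((-(α*(π/(2*μ))):ℝ)*Complex.I) := sub_eq_zero.mp h
        have hone : Complex.exp (((β*(π/(2*μ)):ℝ) : ℂ)*Complex.I
            - ((-(α*(π/(2*μ))):ℝ) : ℂ)*Complex.I) = 1 := by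
          rw [Complex.exp_sub, hxy, div_self (Complex.exp_ne_zero _)]
        have hr : β*(π/(2*μ)) + α*(π/(2*μ)) = π := by
          rw [hα, hβ]; field_simp; ring
        have harg : ((β*(π/(2*μ)):ℝ) : ℂ)*Complex.I - ((-(α*(π/(2*μ))):ℝ) : ℂ)*Complex.I
            = ((π:ℝ) : ℂ)*Complex.I := by
          calc ((β*(π/(2*μ)):ℝ) : ℂ)*Complex.I - ((-(α*(π/(2*μ))):ℝ) : ℂ)*Complex.I
              = ((β*(π/(2*μ)) + α*(π/(2*μ)) : ℝ) : ℂ) * Complex.I := by push_cast; ring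
            _ = ((π:ℝ) : ℂ)*Complex.I := by rw [hr]
        rw [harg, Complex.exp_pi_mul_I] at hone
        norm_num at hone
      · exact hne (sub_eq_zero.mp h)
    have hQ : Complex.exp ((-(α*T):ℝ)*Complex.I) = 1 := hE2.trans hP
    obtain ⟨k, hk⟩ := Complex.exp_eq_one_iff.mp hP
    obtain ⟨m, hm⟩ := Complex.exp_eq_one_iff.mp hQ
    have hβT : β*T = (k:ℝ)*(2*π) := by
      have h1 : ((β*T : ℝ) : ℂ) * Complex.I = (((k:ℝ)*(2*π) : ℝ) : ℂ) * Complex.I := by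
        rw [hk]; push_cast; ring
      have h2 := mul_right_cancel₀ Complex.I_ne_zero h1
      exact_mod_cast h2
    have hαT : α*T = -((m:ℝ)*(2*π)) := by
      have h1 : ((-(α*T) : ℝ) : ℂ) * Complex.I = (((m:ℝ)*(2*π) : ℝ) : ℂ) * Complex.I := by
        rw [hm]; push_cast; ring
      have h2 := mul_right_cancel₀ Complex.I_ne_zero h1
      have h3 : -(α*T) = (m:ℝ)*(2*π) := by exact_mod_cast h2
      linarith
    have hβT' : (μ - lam)*T = (k:ℝ)*(2*π) := by rw [← hβ]; exact hβT
    have hαT' : (μ + lam)*T = -((m:ℝ)*(2*π)) := by rw [← hα]; exact hαT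
    have hμT : μ*T = π*(-(m:ℝ) + k) := by linear_combination (hβT' + hαT')/2
    have hlamT : lam*T = -(π*((m:ℝ)+k)) := by linear_combination (hαT' - hβT')/2
    have hπ : (0:ℝ) < π := Real.pi_pos
    have hkm : (0:ℝ) < -(m:ℝ) + k := by
      have h1 : (0:ℝ) < μ*T := mul_pos hμpos hT
      rw [hμT] at h1
      nlinarith
    have hkm' : (-(m:ℝ) + k) ≠ 0 := ne_of_gt hkm
    refine ⟨((-m - k : ℤ) : ℚ)/((-m + k : ℤ) : ℚ), ?_⟩
    have hcast : ((((-m - k : ℤ) : ℚ)/((-m + k : ℤ) : ℚ) : ℚ) : ℝ)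
        = ((-(m:ℝ) - k))/(-(m:ℝ) + k) := by push_cast; ring
    rw [hcast, div_eq_div_iff hμne hkm']
    have hπT : π*T ≠ 0 := by positivity
    apply mul_right_cancel₀ hπT
    linear_combination (π*(-(m:ℝ)+k))*hlamT + (π*((m:ℝ)+k))*hμT
  · rintro ⟨r, hr⟩
    have hden : (0:ℝ) < (r.den:ℝ) := by exact_mod_cast r.pos
    have hrμ : lam = (r:ℝ) * μ := by
      rw [div_eq_iff hμne] at hr
      exact hr
    refine ⟨2*π*(r.den:ℝ)/μ, by positivity, ?_⟩
    intro s
    have hnum : (r:ℝ) * (r.den:ℝ) = (r.num:ℝ) := by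
      rw [Rat.cast_def]
      field_simp
    have e1 : lam*(s + 2*π*(r.den:ℝ)/μ) = lam*s + (r.num:ℤ)*(2*π) := by
      rw [mul_add, hrμ]
      have : (r:ℝ) * μ * (2*π*(r.den:ℝ)/μ) = (r.num:ℝ)*(2*π) := by
        field_simp
        linear_combination hnum
      rw [this]
    have e2 : μ*(s + 2*π*(r.den:ℝ)/μ) = μ*s + ((r.den:ℤ):ℝ)*(2*π) := by
      rw [mul_add]
      have : μ * (2*π*(r.den:ℝ)/μ) = ((r.den:ℤ):ℝ)*(2*π) := by
        field_simp
        norm_cast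
      rw [this]
    rw [hform (s + 2*π*(r.den:ℝ)/μ), hform s, e1, e2]
    simp only [Real.cos_add_int_mul_two_pi, Real.sin_add_int_mul_two_pi]
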